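/- Let g be a finite-dimensional Lie algebra over ℂ, μ ∈ g*, and for t ∈ ℂ let μ_t : S(g) → S(g) be the algebra automorphism induced by the shift x ↦ x + t·μ(x) on g (viewing elements of S(g) = ℂ[g*] as polynomial functions, this shifts the argument by tμ). If Φ and Ψ are Poisson-central elements of S(g) (i.e., g-invariants), then for all s, t ∈ ℂ the shifted elements Φ(· + sμ) and Ψ(· + tμ) Poisson-commute in S(g). -/

import Mathlib

open MvPolynomial

variable {ι g : Type*} [Fintype ι] [DecidableEq ι]
  [LieRing g] [LieAlgebra ℂ g]

/-- The linear embedding of `g` into `S(g) = ℂ[g*]`, written in the basis `b`. -/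
noncomputable def toPoly (b : Module.Basis ι ℂ g) (x : g) : MvPolynomial ι ℂ :=
  ∑ i, (b.repr x i) • X i

/-- The Poisson–Lie bracket on `S(g) = ℂ[g*]`, written in the basis `b`:
`{f,h} = Σ_{i,j} ∂_i f ∂_j h · [b i, b j]`. -/
noncomputable def liePB (b : Module.Basis ι ℂ g) (f h : MvPolynomial ι ℂ) : MvPolynomial ι ℂ :=
  ∑ i, ∑ j, pderiv i f * pderiv j h * toPoly b ⁅b i, b j⁆

/-- The argument shift `f ↦ f(· + tμ)` on `S(g) = ℂ[g*]`: the algebra automorphism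
induced by `x ↦ x + t·μ(x)` on generators. -/
noncomputable def argShift (b : Module.Basis ι ℂ g) (μ : Module.Dual ℂ g) (t : ℂ) :
    MvPolynomial ι ℂ →ₐ[ℂ] MvPolynomial ι ℂ :=
  aeval (fun i => X i + C (t * μ (b i)))

/-! ## Auxiliary lemmas -/

lemma myLieSum {α : Type*} (x : g) (s : Finset α) (f : α → g) :
    ⁅x, ∑ i ∈ s, f i⁆ = ∑ i ∈ s, ⁅x, f i⁆ :=
  map_sum (LieAlgebra.ad ℂ g x) f s

lemma mySumLie {α : Type*} (s : Finset α) (f : α → g) (y : g) :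
    ⁅∑ i ∈ s, f i, y⁆ = ∑ i ∈ s, ⁅f i, y⁆ := by
  rw [← lie_skew, myLieSum, ← Finset.sum_neg_distrib]
  simp

/-- The linear functional on `g` given by a point `v` of the dual (in coordinates). -/
noncomputable def Lv (b : Module.Basis ι ℂ g) (v : ι → ℂ) : g →ₗ[ℂ] ℂ :=
  (Finsupp.linearCombination ℂ v).comp (b.repr : g →ₗ[ℂ] (ι →₀ ℂ))

lemma Lv_apply (b : Module.Basis ι ℂ g) (v : ι → ℂ) (x : g) :
    Lv b v x = ∑ i, b.repr x i * v i := by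
  rw [Lv, LinearMap.comp_apply, LinearEquiv.coe_coe, Finsupp.linearCombination_apply,
    Finsupp.sum_fintype]
  · simp [smul_eq_mul]
  · simp

lemma eval_toPoly (b : Module.Basis ι ℂ g) (v : ι → ℂ) (x : g) :
    eval v (toPoly b x) = Lv b v x := by
  simp [toPoly, Lv_apply, smul_eval]

lemma Lv_shift (b : Module.Basis ι ℂ g) (μ : Module.Dual ℂ g) (v : ι → ℂ) (r : ℂ) (x : g) :
    Lv b (fun i => v i + r * μ (b i)) x = Lv b v x + r * μ x := by
  have hx : μ x = ∑ i, b.repr x i * μ (b i) := by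
    conv_lhs => rw [← b.sum_repr x]
    rw [map_sum]
    simp only [map_smul, smul_eq_mul]
  simp only [Lv_apply, hx, mul_add, Finset.sum_add_distrib, Finset.mul_sum]
  ring_nf
  congr 1
  apply Finset.sum_congr rfl
  intro i _
  ring

/-- The "differential" of `f` at `v`, as an element of `g`. -/
noncomputable def Dv (b : Module.Basis ι ℂ g) (f : MvPolynomial ι ℂ) (v : ι → ℂ) : g :=
  ∑ i, eval v (pderiv i f) • b i

lemma Lv_lie_Dv (b : Module.Basis ι ℂ g) (v w₁ w₂ : ι → ℂ) (f h : MvPolynomial ι ℂ) :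
    Lv b v ⁅Dv b f w₁, Dv b h w₂⁆
      = ∑ i, ∑ j, eval w₁ (pderiv i f) * eval w₂ (pderiv j h) * Lv b v ⁅b i, b j⁆ := by
  rw [Dv, Dv, mySumLie, map_sum]
  apply Finset.sum_congr rfl
  intro i _
  rw [smul_lie, myLieSum, map_smul, map_sum, smul_eq_mul, Finset.mul_sum]
  apply Finset.sum_congr rfl
  intro j _
  rw [lie_smul, map_smul, smul_eq_mul]
  ring

lemma mu_lie_Dv (b : Module.Basis ι ℂ g) (μ : Module.Dual ℂ g) (x : g) (h : MvPolynomial ι ℂ)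
    (w : ι → ℂ) :
    μ ⁅x, Dv b h w⁆ = ∑ j, eval w (pderiv j h) * μ ⁅x, b j⁆ := by
  rw [Dv, myLieSum, map_sum]
  apply Finset.sum_congr rfl
  intro j _
  rw [lie_smul, map_smul, smul_eq_mul]

lemma invariance (b : Module.Basis ι ℂ g) (f : MvPolynomial ι ℂ)
    (hf : ∀ p : MvPolynomial ι ℂ, liePB b f p = 0) (v : ι → ℂ) (x : g) :
    Lv b v ⁅Dv b f v, x⁆ = 0 := by
  have hk : ∀ k, Lv b v ⁅Dv b f v, b k⁆ = 0 := by
    intro k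
    have h0 := congrArg (eval v) (hf (X k))
    rw [map_zero, liePB] at h0
    simp only [pderiv_X, Pi.single_apply, apply_ite, mul_ite, mul_one, mul_zero, ite_mul,
      zero_mul, Finset.sum_ite_eq', Finset.mem_univ, if_true, map_sum, map_mul,
      eval_toPoly] at h0
    rw [Dv, mySumLie, map_sum]
    simpa using h0
  conv_lhs => rw [← b.sum_repr x, myLieSum, map_sum]
  simp [lie_smul, hk]

lemma argShift_X (b : Module.Basis ι ℂ g) (μ : Module.Dual ℂ g) (t : ℂ) (j : ι) :
    argShift b μ t (X j) = X j + C (t * μ (b j)) := by simp [argShift]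

lemma pderiv_argShift (b : Module.Basis ι ℂ g) (μ : Module.Dual ℂ g) (t : ℂ) (i : ι)
    (f : MvPolynomial ι ℂ) :
    pderiv i (argShift b μ t f) = argShift b μ t (pderiv i f) := by
  induction f using MvPolynomial.induction_on with
  | C a => simp [argShift]
  | add p q hp hq => simp [map_add, hp, hq]
  | mul_X p j hp =>
    simp only [map_mul, argShift_X, pderiv_mul, hp, pderiv_C, pderiv_X,
      Pi.single_apply, apply_ite, map_one, map_zero, map_add]
    split_ifs <;> ring

lemma aeval_eq_eval' (v : ι → ℂ) (p : MvPolynomial ι ℂ) :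
    (aeval v : MvPolynomial ι ℂ →ₐ[ℂ] ℂ) p = eval v p :=
  congrFun (congrArg DFunLike.coe (MvPolynomial.coe_aeval_eq_eval v)) p

lemma eval_argShift (b : Module.Basis ι ℂ g) (μ : Module.Dual ℂ g) (t : ℂ) (v : ι → ℂ)
    (f : MvPolynomial ι ℂ) :
    eval v (argShift b μ t f) = eval (fun i => v i + t * μ (b i)) f := by
  rw [← aeval_eq_eval', argShift, comp_aeval_apply, ← aeval_eq_eval']
  have h : (fun i => (aeval v : MvPolynomial ι ℂ →ₐ[ℂ] ℂ) (X i + C (t * μ (b i))))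
      = fun i => v i + t * μ (b i) := by
    funext i
    simp only [map_add, aeval_X, aeval_C, Algebra.algebraMap_self, RingHom.id_apply]
  rw [h]

lemma eval_liePB (b : Module.Basis ι ℂ g) (v : ι → ℂ) (f h : MvPolynomial ι ℂ) :
    eval v (liePB b f h)
      = ∑ i, ∑ j, eval v (pderiv i f) * eval v (pderiv j h) * Lv b v ⁅b i, b j⁆ := by
  simp [liePB, eval_toPoly]

lemma eval_line (p : MvPolynomial ι ℂ) (v c : ι → ℂ) (r : ℂ) :
    Polynomial.eval r
        (MvPolynomial.aeval
          (fun i => Polynomial.C (v i) + Polynomial.C (c i) * Polynomial.X) p)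
      = eval (fun i => v i + r * c i) p := by
  rw [← Polynomial.coe_aeval_eq_eval, comp_aeval_apply, ← aeval_eq_eval']
  have h : (fun i => (Polynomial.aeval r : Polynomial ℂ →ₐ[ℂ] ℂ)
        (Polynomial.C (v i) + Polynomial.C (c i) * Polynomial.X))
      = fun i => v i + r * c i := by
    funext i
    simp only [map_add, map_mul, Polynomial.aeval_X, Polynomial.aeval_C,
      Algebra.algebraMap_self, RingHom.id_apply, mul_comm]
  rw [h]

/-- if `Φ` and `Ψ` are Poisson-central elements of `S(g)`, then for all
`s, t ∈ ℂ` the shifted elements `Φ(· + sμ)` and `Ψ(· + tμ)` Poisson-commute. -/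
theorem stmt2 (b : Module.Basis ι ℂ g) (μ : Module.Dual ℂ g)
    (Φ Ψ : MvPolynomial ι ℂ)
    (hΦ : ∀ f : MvPolynomial ι ℂ, liePB b Φ f = 0)
    (hΨ : ∀ f : MvPolynomial ι ℂ, liePB b Ψ f = 0) :
    ∀ s t : ℂ, liePB b (argShift b μ s Φ) (argShift b μ t Ψ) = 0 := by
  intro s t
  refine MvPolynomial.funext fun v => ?_
  rw [map_zero]
  set w : ℂ → ι → ℂ := fun r i => v i + r * μ (b i) with hw
  -- rewrite the evaluated bracket as Lv v ⁅X, Y_t⁆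
  have hLHS : eval v (liePB b (argShift b μ s Φ) (argShift b μ t Ψ))
      = Lv b v ⁅Dv b Φ (w s), Dv b Ψ (w t)⁆ := by
    rw [eval_liePB, Lv_lie_Dv]
    apply Finset.sum_congr rfl; intro i _
    apply Finset.sum_congr rfl; intro j _
    rw [pderiv_argShift, pderiv_argShift, eval_argShift, eval_argShift]
  -- the two invariance identities, written at the base point v
  have hA : ∀ r r' : ℂ, Lv b v ⁅Dv b Φ (w r), Dv b Ψ (w r')⁆
      + r * μ ⁅Dv b Φ (w r), Dv b Ψ (w r')⁆ = 0 := by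
    intro r r'
    have := invariance b Φ hΦ (w r) (Dv b Ψ (w r'))
    rwa [hw, Lv_shift] at this
  have hB : ∀ r r' : ℂ, Lv b v ⁅Dv b Φ (w r), Dv b Ψ (w r')⁆
      + r' * μ ⁅Dv b Φ (w r), Dv b Ψ (w r')⁆ = 0 := by
    intro r r'
    have h1 := invariance b Ψ hΨ (w r') (Dv b Φ (w r))
    have h2 : Lv b (w r') ⁅Dv b Φ (w r), Dv b Ψ (w r')⁆ = 0 := by
      rw [← lie_skew, map_neg, h1, neg_zero]
    rwa [hw, Lv_shift] at h2
  -- off the diagonal, μ of the bracket vanishes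
  have hOff : ∀ r : ℂ, r ≠ s → μ ⁅Dv b Φ (w s), Dv b Ψ (w r)⁆ = 0 := by
    intro r hr
    have h1 := hA s r
    have h2 := hB s r
    have h3 : (s - r) * μ ⁅Dv b Φ (w s), Dv b Ψ (w r)⁆ = 0 := by linear_combination h1 - h2
    have hsr : s - r ≠ 0 := sub_ne_zero.mpr (Ne.symm hr)
    exact (mul_eq_zero.mp h3).resolve_left hsr
  -- polynomial in r, vanishing off the diagonal, hence everywhere
  have hMu : μ ⁅Dv b Φ (w s), Dv b Ψ (w t)⁆ = 0 := by
    set q : Polynomial ℂ := ∑ j,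
      (MvPolynomial.aeval
          (fun i => Polynomial.C (v i) + Polynomial.C (μ (b i)) * Polynomial.X)
          (pderiv j Ψ)) * Polynomial.C (μ ⁅Dv b Φ (w s), b j⁆) with hq
    have hqe : ∀ r : ℂ, Polynomial.eval r q = μ ⁅Dv b Φ (w s), Dv b Ψ (w r)⁆ := by
      intro r
      rw [hq, mu_lie_Dv]
      simp only [Polynomial.eval_finset_sum, Polynomial.eval_mul, Polynomial.eval_C]
      exact Finset.sum_congr rfl fun j _ => by rw [eval_line]
    have hq0 : q = 0 := by
      apply Polynomial.eq_zero_of_infinite_isRoot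
      apply Set.Infinite.mono (s := {s}ᶜ)
      · intro r hr
        have : r ≠ s := hr
        simp only [Set.mem_setOf_eq, Polynomial.IsRoot]
        rw [hqe r, hOff r this]
      · exact Set.Finite.infinite_compl (Set.finite_singleton s)
    have := hqe t
    rw [hq0] at this
    simpa using this.symm
  have := hA s t
  rw [hMu, mul_zero, add_zero] at this
  rw [hLHS, this]
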